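/- Assume the local strong convexity condition: there is μ > 0 such that ⟨F'(x₁)*(F(x₁) − y) − F'(x₂)*(F(x₂) − y), x₁ − x₂⟩ ≥ μ‖x₁ − x₂‖² for all x₁, x₂ ∈ B_{2ρ}(x₀). Then for every x ∈ B_{2ρ}(x₀) there holds μ‖x − x_*‖ ≤ ω̄‖F(x) − y‖; in particular, ‖F(x_k) − y‖ → 0 for a sequence x_k ∈ B_{2ρ}(x₀) implies ‖x_k − x_*‖ → 0. -/

import Mathlib

open Metric Filter
open scoped RealInnerProductSpace Topology

/-- Under local strong convexity of the residual functional,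
`μ‖x − x_*‖ ≤ ω̄‖F(x) − y‖` on `B_{2ρ}(x₀)`; in particular residual convergence to zero
implies strong convergence to `x_*`. -/
theorem strong_convexity_implies_strong_convergence
    {X Y : Type*} [NormedAddCommGroup X] [InnerProductSpace ℝ X] [CompleteSpace X]
    [NormedAddCommGroup Y] [InnerProductSpace ℝ Y] [CompleteSpace Y]
    (x₀ : X) (ρ : ℝ) (hρ : 0 < ρ)
    (F : X → Y) (F' : X → X →L[ℝ] Y)
    (hF : ∀ u ∈ closedBall x₀ (2 * ρ), HasFDerivAt F (F' u) u)
    (ωb : ℝ) (hωb : ∀ u ∈ closedBall x₀ (2 * ρ), ‖F' u‖ ≤ ωb)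
    (y : Y) (xstar : X) (hxstar : xstar ∈ closedBall x₀ (2 * ρ)) (hFxstar : F xstar = y)
    (μ : ℝ) (hμ : 0 < μ)
    -- local strong convexity
    (hsc : ∀ x₁ ∈ closedBall x₀ (2 * ρ), ∀ x₂ ∈ closedBall x₀ (2 * ρ),
      ⟪(ContinuousLinearMap.adjoint (F' x₁)) (F x₁ - y) -
        (ContinuousLinearMap.adjoint (F' x₂)) (F x₂ - y), x₁ - x₂⟫ ≥ μ * ‖x₁ - x₂‖ ^ 2) :
    (∀ x ∈ closedBall x₀ (2 * ρ), μ * ‖x - xstar‖ ≤ ωb * ‖F x - y‖) ∧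
    (∀ xk : ℕ → X, (∀ k, xk k ∈ closedBall x₀ (2 * ρ)) →
      Tendsto (fun k => ‖F (xk k) - y‖) atTop (nhds 0) →
      Tendsto (fun k => ‖xk k - xstar‖) atTop (nhds 0)) := by
  have hx0 : x₀ ∈ closedBall x₀ (2 * ρ) := by
    simp [Metric.mem_closedBall]; linarith
  have hωb0 : 0 ≤ ωb := le_trans (norm_nonneg _) (hωb x₀ hx0)
  have key : ∀ x ∈ closedBall x₀ (2 * ρ), μ * ‖x - xstar‖ ≤ ωb * ‖F x - y‖ := by
    intro x hx
    have h := hsc x hx xstar hxstar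
    rw [hFxstar] at h
    simp only [sub_self, map_zero, sub_zero] at h
    have hadj : ⟪(ContinuousLinearMap.adjoint (F' x)) (F x - y), x - xstar⟫
        = ⟪F x - y, (F' x) (x - xstar)⟫ := ContinuousLinearMap.adjoint_inner_left _ _ _
    have hb : ⟪F x - y, (F' x) (x - xstar)⟫ ≤ ‖F x - y‖ * (ωb * ‖x - xstar‖) := by
      calc ⟪F x - y, (F' x) (x - xstar)⟫ ≤ ‖F x - y‖ * ‖(F' x) (x - xstar)‖ :=
            real_inner_le_norm _ _
        _ ≤ ‖F x - y‖ * (ωb * ‖x - xstar‖) := by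
            apply mul_le_mul_of_nonneg_left _ (norm_nonneg _)
            calc ‖(F' x) (x - xstar)‖ ≤ ‖F' x‖ * ‖x - xstar‖ := (F' x).le_opNorm _
              _ ≤ ωb * ‖x - xstar‖ :=
                mul_le_mul_of_nonneg_right (hωb x hx) (norm_nonneg _)
    have h2 : μ * ‖x - xstar‖ ^ 2 ≤ ωb * ‖F x - y‖ * ‖x - xstar‖ := by
      rw [hadj] at h; nlinarith
    rcases eq_or_lt_of_le (norm_nonneg (x - xstar)) with h0 | h0
    · rw [← h0, mul_zero]; positivity
    · have := (mul_le_mul_iff_of_pos_right h0).mp (by nlinarith : μ * ‖x - xstar‖ * ‖x - xstar‖ ≤ ωb * ‖F x - y‖ * ‖x - xstar‖)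
      exact this
  refine ⟨key, fun xk hk htend => ?_⟩
  have h1 : Tendsto (fun k => (ωb / μ) * ‖F (xk k) - y‖) atTop (nhds 0) := by
    simpa using htend.const_mul (ωb / μ)
  refine squeeze_zero (fun k => norm_nonneg _) (fun k => ?_) h1
  have := key (xk k) (hk k)
  rw [div_mul_eq_mul_div, le_div_iff₀ hμ, mul_comm]
  linarith
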